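/- For every rooted forest Q and every i ≥ 0, the coefficient c_{i,0}(Q) equals the number of matchings of size i in Q: mapping an independent set I of size i having exactly i distinct parent vertices to the set of i edges joining each element of I to its parent is a bijection onto the set of i-element matchings of Q. -/

import Mathlib

open scoped Classical

noncomputable section

/-- A rooting of a forest: a choice of one root in each connected component,
encoded by the set of roots together with the induced parent function. -/
structure Rooting {V : Type} [Fintype V] [DecidableEq V] (G : SimpleGraph V) where
  roots : Set V
  parent : V → V
  parent_of_root : ∀ v ∈ roots, parent v = v
  adj_parent : ∀ v, v ∉ roots → G.Adj v (parent v)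
  reaches : ∀ v : V, ∃ n : ℕ, parent^[n] v ∈ roots
  unique_root : ∀ v : V, ∃! r : V, r ∈ roots ∧ G.Reachable v r

namespace Rooting

variable {V : Type} [Fintype V] [DecidableEq V] {G : SimpleGraph V} (R : Rooting G)

noncomputable def depth (v : V) : ℕ := Nat.find (R.reaches v)

lemma depth_spec (v : V) : R.parent^[R.depth v] v ∈ R.roots := Nat.find_spec (R.reaches v)

lemma depth_min {v : V} {k : ℕ} (hk : k < R.depth v) : R.parent^[k] v ∉ R.roots :=
  Nat.find_min (R.reaches v) hk

lemma iter_inj {v : V} {j k : ℕ} (hj : j ≤ R.depth v) (hk : k ≤ R.depth v)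
    (h : R.parent^[j] v = R.parent^[k] v) : j = k := by
  have key : ∀ j k : ℕ, j < k → k ≤ R.depth v → R.parent^[j] v = R.parent^[k] v → False := by
    intro j k hjk hkd he
    have h1 : R.parent^[R.depth v - k + j] v = R.parent^[R.depth v] v := by
      have : R.parent^[R.depth v - k] (R.parent^[j] v) = R.parent^[R.depth v - k] (R.parent^[k] v) := by
        rw [he]
      rwa [← Function.iterate_add_apply, ← Function.iterate_add_apply,
        Nat.sub_add_cancel hkd] at this
    exact R.depth_min (show R.depth v - k + j < R.depth v by omega) (h1 ▸ R.depth_spec v)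
  rcases lt_trichotomy j k with h' | h' | h'
  · exact absurd (key j k h' hk h) (by simp)
  · exact h'
  · exact absurd (key k j h' hj h.symm) (by simp)

def chainW : (n : ℕ) → (v : V) → (∀ k < n, R.parent^[k] v ∉ R.roots) → G.Walk v (R.parent^[n] v)
  | 0, _, _ => SimpleGraph.Walk.nil
  | n+1, v, h =>
    (SimpleGraph.Walk.cons (R.adj_parent v (by simpa using h 0 (Nat.succ_pos n)))
      (chainW n (R.parent v) (fun k hk => by
        rw [← Function.iterate_succ_apply]
        exact h (k+1) (by omega)))).copy rfl (by rw [← Function.iterate_succ_apply])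

lemma support_chainW : ∀ (n : ℕ) (v : V) (h : ∀ k < n, R.parent^[k] v ∉ R.roots),
    (R.chainW n v h).support = (List.range (n+1)).map (fun k => R.parent^[k] v)
  | 0, v, _ => by simp [chainW]
  | n+1, v, h => by
    rw [chainW, SimpleGraph.Walk.support_copy, SimpleGraph.Walk.support_cons,
      support_chainW n (R.parent v) _]
    rw [@List.range_succ_eq_map (n+1)]
    simp [Function.comp_def, Function.iterate_succ_apply]

lemma length_chainW : ∀ (n : ℕ) (v : V) (h : ∀ k < n, R.parent^[k] v ∉ R.roots),
    (R.chainW n v h).length = n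
  | 0, _, _ => by simp [chainW]
  | n+1, v, h => by
    rw [chainW, SimpleGraph.Walk.length_copy, SimpleGraph.Walk.length_cons,
      length_chainW n (R.parent v) _]

lemma chainW_isPath (n : ℕ) (v : V) (h : ∀ k < n, R.parent^[k] v ∉ R.roots)
    (hn : n ≤ R.depth v) : (R.chainW n v h).IsPath := by
  rw [SimpleGraph.Walk.isPath_def, R.support_chainW]
  refine List.Nodup.map_on ?_ List.nodup_range
  intro j hj k hk he
  rw [List.mem_range] at hj hk
  exact R.iter_inj (by omega) (by omega) he

noncomputable def toRoot (v : V) : G.Walk v (R.parent^[R.depth v] v) :=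
  R.chainW (R.depth v) v (fun _ hk => R.depth_min hk)

lemma toRoot_isPath (v : V) : (R.toRoot v).IsPath :=
  R.chainW_isPath _ _ _ le_rfl

lemma eq_one_of_iterate_adj (hforest : G.IsAcyclic) {a b : V} (hab : G.Adj a b)
    {k : ℕ} (hk : k ≤ R.depth a) (hkb : R.parent^[k] a = b) : k = 1 := by
  have h : ∀ j < k, R.parent^[j] a ∉ R.roots := fun j hj => R.depth_min (by omega)
  let P1 : G.Walk a b := (R.chainW k a h).copy rfl hkb
  have hP1 : P1.IsPath := by
    rw [SimpleGraph.Walk.isPath_copy]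
    exact R.chainW_isPath k a h hk
  let P2 : G.Walk a b := SimpleGraph.Walk.cons hab SimpleGraph.Walk.nil
  have hP2 : P2.IsPath := by
    rw [SimpleGraph.Walk.cons_isPath_iff]
    simp [hab.ne]
  have := SimpleGraph.isAcyclic_iff_path_unique.mp hforest ⟨P1, hP1⟩ ⟨P2, hP2⟩
  have hval : P1 = P2 := Subtype.mk_eq_mk.mp this
  have hlen : P1.length = P2.length := by rw [hval]
  have : P1.length = k := by
    simp only [P1, SimpleGraph.Walk.length_copy]
    exact R.length_chainW k a h
  simp only [P2, SimpleGraph.Walk.length_cons, SimpleGraph.Walk.length_nil] at hlen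
  omega

lemma parent_eq_of_mem_support (hforest : G.IsAcyclic) {a b : V} (hab : G.Adj a b)
    (hb : b ∈ (R.toRoot a).support) : R.parent a = b := by
  rw [toRoot, R.support_chainW, List.mem_map] at hb
  obtain ⟨k, hk, hkb⟩ := hb
  rw [List.mem_range] at hk
  have := R.eq_one_of_iterate_adj hforest hab (by omega) hkb
  subst this
  simpa using hkb

lemma adj_parent_or (hforest : G.IsAcyclic) {a b : V} (hab : G.Adj a b) :
    R.parent a = b ∨ R.parent b = a := by
  by_cases hb : b ∈ (R.toRoot a).support
  · exact Or.inl (R.parent_eq_of_mem_support hforest hab hb)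
  · right
    obtain ⟨r, hr, hu⟩ := R.unique_root b
    have e1 : R.parent^[R.depth a] a = r :=
      hu _ ⟨R.depth_spec a, ((SimpleGraph.Walk.cons hab.symm (R.toRoot a)).reachable)⟩
    have e2 : R.parent^[R.depth b] b = r := hu _ ⟨R.depth_spec b, (R.toRoot b).reachable⟩
    let W : G.Walk b (R.parent^[R.depth b] b) :=
      (SimpleGraph.Walk.cons hab.symm (R.toRoot a)).copy rfl (e1.trans e2.symm)
    have hW : W.IsPath := by
      rw [SimpleGraph.Walk.isPath_copy, SimpleGraph.Walk.cons_isPath_iff]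
      exact ⟨R.toRoot_isPath a, hb⟩
    have heq := SimpleGraph.isAcyclic_iff_path_unique.mp hforest ⟨W, hW⟩ ⟨R.toRoot b, R.toRoot_isPath b⟩
    have hsup : a ∈ (R.toRoot b).support := by
      rw [← Subtype.mk_eq_mk.mp heq]
      simp only [W, SimpleGraph.Walk.support_copy, SimpleGraph.Walk.support_cons]
      exact List.mem_cons_of_mem _ ((R.toRoot a).start_mem_support)
    exact R.parent_eq_of_mem_support hforest hab.symm hsup

lemma no_two_cycle {a b : V} (hne : a ≠ b) (h1 : R.parent a = b) (h2 : R.parent b = a) :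
    False := by
  have ha : a ∉ R.roots := fun h => hne ((R.parent_of_root a h).symm.trans h1)
  have hb : b ∉ R.roots := fun h => hne.symm ((R.parent_of_root b h).symm.trans h2)
  have h2d : 2 ≤ R.depth a := by
    by_contra hlt
    have := R.depth_spec a
    interval_cases h : R.depth a <;> simp_all
  have : (0 : ℕ) = 2 := R.iter_inj (by omega) h2d (by simp [Function.iterate_succ_apply, h1, h2])
  simp at this

lemma child_eq {a b : V} (ha : a ∉ R.roots) (hb : b ∉ R.roots)
    (h : s(a, R.parent a) = s(b, R.parent b)) : a = b := by
  rcases Sym2.eq_iff.mp h with ⟨h1, _⟩ | ⟨h1, h2⟩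
  · exact h1
  · by_contra hne
    exact R.no_two_cycle hne h2 h1.symm

end Rooting

/-- The set of vertices which are the parent of at least one vertex of `I`. -/
def parentsOf {V : Type} [Fintype V] [DecidableEq V] {G : SimpleGraph V}
    (R : Rooting G) (I : Finset V) : Set V :=
  {w : V | ∃ v ∈ I, v ∉ R.roots ∧ R.parent v = w}

/-- `I` is an independent set of vertices. -/
def IsIndep {V : Type} (G : SimpleGraph V) (I : Finset V) : Prop :=
  ∀ x ∈ I, ∀ y ∈ I, ¬ G.Adj x y

/-- `c_{i,j}(Q, R)`: the number of independent sets `I` of size `i` such that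
exactly `i − j` vertices are the parent of at least one vertex of `I`. -/
def cCoeff {V : Type} [Fintype V] [DecidableEq V] (G : SimpleGraph V)
    (R : Rooting G) (i j : ℕ) : ℕ :=
  Set.ncard {I : Finset V | I.card = i ∧ IsIndep G I ∧ (parentsOf R I).ncard + j = i}

/-- `M` is a matching of `G`: a set of edges, no two sharing an endpoint. -/
def IsMatching {V : Type} (G : SimpleGraph V) (M : Finset (Sym2 V)) : Prop :=
  (∀ e ∈ M, e ∈ G.edgeSet) ∧ ∀ e ∈ M, ∀ e' ∈ M, e ≠ e' → ∀ x : V, x ∈ e → x ∉ e'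

/-- `b_i(Q)`: the number of matchings of size `i` in `G`. -/
def matchCount {V : Type} [Fintype V] [DecidableEq V] (G : SimpleGraph V) (i : ℕ) : ℕ :=
  Set.ncard {M : Finset (Sym2 V) | M.card = i ∧ IsMatching G M}


lemma parentsOf_full {V : Type} [Fintype V] [DecidableEq V] {G : SimpleGraph V}
    (R : Rooting G) {I : Finset V} (hcard : (parentsOf R I).ncard = I.card) :
    (∀ v ∈ I, v ∉ R.roots) ∧ Set.InjOn R.parent ↑I := by
  classical
  have hset : parentsOf R I = ↑((I.filter (fun v => v ∉ R.roots)).image R.parent) := by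
    ext w
    simp only [parentsOf, Set.mem_setOf_eq, Finset.coe_image, Set.mem_image,
      Finset.mem_coe, Finset.mem_filter]
    tauto
  rw [hset, Set.ncard_coe_finset] at hcard
  have h1 : ((I.filter (fun v => v ∉ R.roots)).image R.parent).card
      ≤ (I.filter (fun v => v ∉ R.roots)).card := Finset.card_image_le
  have h2 : (I.filter (fun v => v ∉ R.roots)).card ≤ I.card :=
    Finset.card_le_card (Finset.filter_subset _ _)
  have hfe : I.filter (fun v => v ∉ R.roots) = I :=
    Finset.eq_of_subset_of_card_le (Finset.filter_subset _ _) (by omega)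
  have hroot : ∀ v ∈ I, v ∉ R.roots := Finset.filter_eq_self.mp hfe
  rw [hfe] at hcard
  exact ⟨hroot, Finset.card_image_iff.mp hcard⟩

/-- `c_{i,0}(Q)` equals the number of matchings of size `i`: the map sending an
independent set `I` (with `i` distinct parents) to the set of edges joining each
element of `I` to its parent is a bijection onto the `i`-element matchings. -/
theorem cCoeff_zero_eq_matchCount
    {V : Type} [Fintype V] [DecidableEq V] (G : SimpleGraph V)
    (hforest : G.IsAcyclic) (R : Rooting G) (i : ℕ) :
    Set.BijOn (fun I : Finset V => I.image (fun v => s(v, R.parent v)))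
      {I : Finset V | I.card = i ∧ IsIndep G I ∧ (parentsOf R I).ncard = i}
      {M : Finset (Sym2 V) | M.card = i ∧ IsMatching G M} ∧
    cCoeff G R i 0 = matchCount G i := by
  classical
  set f0 : V → Sym2 V := fun v => s(v, R.parent v) with hf0
  set S : Set (Finset V) :=
    {I : Finset V | I.card = i ∧ IsIndep G I ∧ (parentsOf R I).ncard = i} with hS
  set T : Set (Finset (Sym2 V)) := {M : Finset (Sym2 V) | M.card = i ∧ IsMatching G M} with hT
  have hmap : Set.MapsTo (fun I : Finset V => I.image f0) S T := by
    intro I hI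
    obtain ⟨hcard, hind, hpar⟩ := hI
    obtain ⟨hroot, hinjp⟩ := parentsOf_full R (by rw [hpar, hcard])
    have hinj0 : Set.InjOn f0 ↑I := fun a ha b hb h =>
      R.child_eq (hroot a ha) (hroot b hb) h
    constructor
    · rw [Finset.card_image_iff.mpr hinj0, hcard]
    constructor
    · intro e he
      obtain ⟨v, hv, rfl⟩ := Finset.mem_image.mp he
      exact (R.adj_parent v (hroot v hv))
    · intro e he e' he' hne x hx hx'
      obtain ⟨v, hv, rfl⟩ := Finset.mem_image.mp he
      obtain ⟨u, hu, rfl⟩ := Finset.mem_image.mp he'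
      have hx1 : x = v ∨ x = R.parent v := Sym2.mem_iff.mp hx
      have hx2 : x = u ∨ x = R.parent u := Sym2.mem_iff.mp hx'
      have hvu : v ≠ u := fun h => hne (by rw [h])
      rcases hx1 with h1 | h1 <;> rcases hx2 with h2 | h2
      · exact hvu (h1.symm.trans h2)
      · have hpu : R.parent u = v := (h1.symm.trans h2).symm
        exact hind u hu v hv (hpu ▸ R.adj_parent u (hroot u hu))
      · have hpv : R.parent v = u := h1.symm.trans h2
        exact hind v hv u hu (hpv ▸ R.adj_parent v (hroot v hv))
      · exact hvu (hinjp hv hu (h1.symm.trans h2))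
  have hinj : Set.InjOn (fun I : Finset V => I.image f0) S := by
    have key : ∀ J K : Finset V, J ∈ S → K ∈ S → J.image f0 = K.image f0 → J ⊆ K := by
      intro J K hJ hK h v hv
      obtain ⟨hJc, _, hJp⟩ := hJ
      obtain ⟨hKc, _, hKp⟩ := hK
      obtain ⟨hrootJ, _⟩ := parentsOf_full R (by rw [hJp, hJc])
      obtain ⟨hrootK, _⟩ := parentsOf_full R (by rw [hKp, hKc])
      have : f0 v ∈ K.image f0 := h ▸ Finset.mem_image_of_mem f0 hv
      obtain ⟨u, hu, he⟩ := Finset.mem_image.mp this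
      have := R.child_eq (hrootK u hu) (hrootJ v hv) he
      exact this ▸ hu
    intro I hI I' hI' h
    exact Finset.Subset.antisymm (key _ _ hI hI' h) (key _ _ hI' hI h.symm)
  have hsurj : Set.SurjOn (fun I : Finset V => I.image f0) S T := by
    intro M hM
    obtain ⟨hMcard, hMedge, hMdisj⟩ := hM
    have hchild : ∀ e ∈ M, ∃ v, v ∉ R.roots ∧ f0 v = e := by
      intro e he
      induction e with
      | _ a b =>
        have hab : G.Adj a b := (SimpleGraph.mem_edgeSet G).mp (hMedge _ he)
        rcases R.adj_parent_or hforest hab with h | h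
        · refine ⟨a, fun hr => hab.ne ((R.parent_of_root a hr).symm.trans h), ?_⟩
          show s(a, R.parent a) = s(a, b)
          rw [h]
        · refine ⟨b, fun hr => hab.ne' ((R.parent_of_root b hr).symm.trans h), ?_⟩
          show s(b, R.parent b) = s(a, b)
          rw [h, Sym2.eq_swap]
    set I : Finset V := Finset.univ.filter (fun v => v ∉ R.roots ∧ f0 v ∈ M) with hI
    have hroot : ∀ v ∈ I, v ∉ R.roots := fun v hv => ((Finset.mem_filter.mp hv).2).1
    have hmem : ∀ v ∈ I, f0 v ∈ M := fun v hv => ((Finset.mem_filter.mp hv).2).2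
    have hinj0 : Set.InjOn f0 ↑I := fun a ha b hb h =>
      R.child_eq (hroot a ha) (hroot b hb) h
    have himg : I.image f0 = M := by
      apply Finset.Subset.antisymm
      · intro e he
        obtain ⟨v, hv, rfl⟩ := Finset.mem_image.mp he
        exact hmem v hv
      · intro e he
        obtain ⟨v, hv, hve⟩ := hchild e he
        exact Finset.mem_image.mpr ⟨v, Finset.mem_filter.mpr ⟨Finset.mem_univ v, hv, hve ▸ he⟩, hve⟩
    have hIcard : I.card = i := by
      rw [← hMcard, ← himg, Finset.card_image_iff.mpr hinj0]
    have hnotwo : ∀ x ∈ I, ∀ y ∈ I, G.Adj x y → R.parent x = y → False := by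
      intro x hx y hy hadj hpx
      have hne : f0 x ≠ f0 y := by
        intro h
        have h' : s(x, R.parent x) = s(y, R.parent y) := h
        rcases Sym2.eq_iff.mp h' with ⟨h1, _⟩ | ⟨h1, h2⟩
        · exact hadj.ne h1
        · exact R.no_two_cycle hadj.ne hpx h1.symm
      exact hMdisj _ (hmem x hx) _ (hmem y hy) hne y
        (show y ∈ s(x, R.parent x) from Sym2.mem_iff.mpr (Or.inr hpx.symm))
        (Sym2.mem_mk_left y (R.parent y))
    have hind : IsIndep G I := by
      intro x hx y hy hadj
      rcases R.adj_parent_or hforest hadj with h | h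
      · exact hnotwo x hx y hy hadj h
      · exact hnotwo y hy x hx hadj.symm h
    have hinjp : Set.InjOn R.parent ↑I := by
      intro x hx y hy h
      rw [Finset.mem_coe] at hx hy
      by_contra hne
      have hfne : f0 x ≠ f0 y := fun hh => hne (hinj0 hx hy hh)
      refine hMdisj _ (hmem x hx) _ (hmem y hy) hfne (R.parent x)
        (Sym2.mem_mk_right x (R.parent x)) ?_
      show R.parent x ∈ s(y, R.parent y)
      rw [h]
      exact Sym2.mem_mk_right y (R.parent y)
    have hpar : (parentsOf R I).ncard = i := by
      have hset : parentsOf R I = ↑(I.image R.parent) := by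
        ext w
        simp only [parentsOf, Set.mem_setOf_eq, Finset.coe_image, Set.mem_image,
          Finset.mem_coe]
        constructor
        · rintro ⟨v, hv, _, h⟩; exact ⟨v, hv, h⟩
        · rintro ⟨v, hv, h⟩; exact ⟨v, hv, hroot v hv, h⟩
      rw [hset, Set.ncard_coe_finset, Finset.card_image_iff.mpr hinjp, hIcard]
    exact ⟨I, ⟨hIcard, hind, hpar⟩, himg⟩
  have hbij : Set.BijOn (fun I : Finset V => I.image f0) S T := ⟨hmap, hinj, hsurj⟩
  refine ⟨hbij, ?_⟩
  have hSeq : {I : Finset V | I.card = i ∧ IsIndep G I ∧ (parentsOf R I).ncard + 0 = i} = S := by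
    simp [hS]
  rw [cCoeff, matchCount, hSeq, ← hT, ← hbij.image_eq, Set.ncard_image_of_injOn hinj]
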